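/- For every real x>0 and all integers 1 ≤ n < k, | ∑_{i=n}^{k−1} (−1)^{i+n} C(i,n) x^{i−n}/i − n^{−1}(1+x)^{−n} | ≤ n^{−1} C(k−1, k−n) x^{k−n}. -/

import Mathlib

open Set

-- iterated derivative formula
lemma iterDeriv_formula (x : ℝ) (hx : 0 < x) (n : ℕ) (hn : 1 ≤ n) (m : ℕ) :
    Set.EqOn (iteratedDerivWithin m (fun t : ℝ => ((1+t)^n)⁻¹) (Icc 0 x))
      (fun t : ℝ => (-1)^m * (Nat.ascFactorial n m : ℝ) * ((1+t)^(n+m))⁻¹) (Icc 0 x) := by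
  have hud : UniqueDiffOn ℝ (Icc (0:ℝ) x) := uniqueDiffOn_Icc hx
  induction m with
  | zero =>
      intro t ht
      simp [iteratedDerivWithin_zero]
  | succ m ih =>
      intro t ht
      have h1 : (0:ℝ) < 1 + t := by have := ht.1; linarith
      rw [iteratedDerivWithin_succ, derivWithin_congr ih (ih ht)]
      have hd : HasDerivAt (fun t : ℝ => (-1:ℝ)^m * (Nat.ascFactorial n m : ℝ) * ((1+t)^(n+m))⁻¹)
          ((-1:ℝ)^m * (Nat.ascFactorial n m : ℝ) *
            (-(((n:ℝ)+m) * (1+t)^(n+m-1) * 1) / ((1+t)^(n+m))^2)) t := by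
        have h0 : HasDerivAt (fun t : ℝ => 1 + t) 1 t := (hasDerivAt_id t).const_add 1
        have h2 : HasDerivAt (fun t : ℝ => (1+t)^(n+m)) (((n+m:ℕ):ℝ) * (1+t)^(n+m-1) * 1) t :=
          h0.pow (n+m)
        have h3 := h2.inv (pow_ne_zero _ h1.ne')
        push_cast at h3 ⊢
        exact h3.const_mul _
      rw [hd.hasDerivWithinAt.derivWithin (hud t ht)]
      have hpow : ((1+t)^(n+m))^2 = (1+t)^(n+m-1) * (1+t)^(n+m+1) := by
        rw [← pow_mul, ← pow_add]; congr 1; omega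
      have hA : (Nat.ascFactorial n (m+1) : ℝ) = ((n:ℝ)+m) * (Nat.ascFactorial n m : ℝ) := by
        rw [Nat.ascFactorial_succ]; push_cast; ring
      simp only [hA, hpow]
      have hne1 : (1+t)^(n+m-1) ≠ 0 := pow_ne_zero _ h1.ne'
      have hne2 : (1+t)^(n+m+1) ≠ 0 := pow_ne_zero _ h1.ne'
      field_simp
      ring

/-- For every real `x > 0` and all integers `1 ≤ n < k`,
`| ∑_{i=n}^{k−1} (−1)^{i+n} C(i,n) x^{i−n}/i − n⁻¹(1+x)^{−n} | ≤ n⁻¹ C(k−1, k−n) x^{k−n}`. -/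
theorem taylor_remainder_bound (x : ℝ) (hx : 0 < x) (n k : ℕ)
    (hn : 1 ≤ n) (hk : n < k) :
    |(∑ i ∈ Finset.Ico n k, (-1 : ℝ) ^ (i + n) * (i.choose n : ℝ) * x ^ (i - n) / (i : ℝ)) -
        (n : ℝ)⁻¹ * ((1 + x) ^ n)⁻¹| ≤
      (n : ℝ)⁻¹ * ((k - 1).choose (k - n) : ℝ) * x ^ (k - n) := by
  obtain ⟨a, rfl⟩ : ∃ a, n = a + 1 := ⟨n - 1, by omega⟩
  obtain ⟨J, rfl⟩ : ∃ J, k = (a+1) + (J+1) := ⟨k - (a+1) - 1, by omega⟩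
  set n := a + 1
  set K := J + 1
  set s : Set ℝ := Icc 0 x
  set f : ℝ → ℝ := fun t : ℝ => ((1+t)^n)⁻¹ with hf_def
  have hud : UniqueDiffOn ℝ s := uniqueDiffOn_Icc hx
  have hformula := iterDeriv_formula x hx n (by omega)
  -- smoothness
  have hcd : ContDiffOn ℝ (J : ℕ∞) f s := by
    apply ContDiffOn.inv
    · exact ((contDiff_const.add contDiff_id).pow n).contDiffOn
    · intro t ht
      exact pow_ne_zero _ (by have := ht.1; positivity)
  have hdiff : DifferentiableOn ℝ (iteratedDerivWithin J f s) (Ioo 0 x) := by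
    apply DifferentiableOn.congr (f := fun t : ℝ =>
        (-1)^J * (Nat.ascFactorial n J : ℝ) * ((1+t)^(n+J))⁻¹)
    · intro t ht
      have h1 : (0:ℝ) < 1 + t := by have := ht.1; linarith
      exact (((((hasDerivAt_id t).const_add 1).pow (n+J)).inv
        (pow_ne_zero _ h1.ne')).const_mul _).differentiableAt.differentiableWithinAt
    · intro t ht
      exact hformula J (Ioo_subset_Icc_self ht)
  have hs : Icc 0 x = s := rfl
  obtain ⟨x', hx', hrem⟩ := taylor_mean_remainder_lagrange (f := f) (x₀ := 0) (x := x) (n := J) hx.ne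
    (by rw [uIcc_of_le hx.le, hs]; exact hcd) (by rw [uIcc_of_le hx.le, uIoo_of_le hx.le, hs]; exact hdiff)
  rw [uIcc_of_le hx.le, hs] at hrem
  rw [uIoo_of_le hx.le] at hx'
  -- rewrite the taylor polynomial
  have hpoly : taylorWithinEval f J s 0 x =
      ∑ m ∈ Finset.range K, (-1:ℝ)^m * ((a+m).choose m : ℝ) * x^m := by
    rw [taylor_within_apply]
    apply Finset.sum_congr rfl
    intro m hm
    rw [hformula m (by constructor <;> [norm_num; positivity])]
    have hasc : (Nat.ascFactorial n m : ℝ) = (m.factorial : ℝ) * ((a+m).choose m : ℝ) := by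
      rw [Nat.ascFactorial_eq_factorial_mul_choose']
      push_cast
      congr 3
      omega
    simp only [smul_eq_mul, sub_zero, add_zero, one_pow, inv_one, mul_one, hasc]
    have : (m.factorial : ℝ) ≠ 0 := Nat.cast_ne_zero.mpr m.factorial_ne_zero
    field_simp
  -- rewrite the original sum
  have hsum : (∑ i ∈ Finset.Ico n (n+K), (-1 : ℝ) ^ (i + n) * (i.choose n : ℝ) * x ^ (i - n) / (i : ℝ))
      = (n:ℝ)⁻¹ * taylorWithinEval f J s 0 x := by
    rw [hpoly, Finset.mul_sum, Finset.sum_Ico_eq_sum_range]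
    simp only [Nat.add_sub_cancel_left]
    apply Finset.sum_congr rfl
    intro m hm
    have hsign : (-1:ℝ)^(n+m+n) = (-1)^m := by
      rw [show n+m+n = m + 2*n by ring, pow_add, pow_mul]
      simp
    have h2 : (a+m).choose a = (a+m).choose m := by
      rw [← Nat.choose_symm (Nat.le_add_right a m)]
      congr 1
      omega
    have hN : n * ((n+m).choose n) = (n+m) * ((a+m).choose m) := by
      have h1 := Nat.add_one_mul_choose_eq (a+m) a
      show (a+1) * ((a+1+m).choose (a+1)) = (a+1+m) * ((a+m).choose m)
      rw [show a+1+m = a+m+1 by omega, ← h2, h1]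
      ring
    have hchoose : (n:ℝ) * ((n+m).choose n : ℝ) = ((n:ℝ)+(m:ℝ)) * ((a+m).choose m : ℝ) := by
      exact_mod_cast congrArg (Nat.cast (R := ℝ)) hN
    have hnm : ((a:ℝ)+1+(m:ℝ)) ≠ 0 := by positivity
    rw [hsign]
    push_cast at hchoose ⊢
    rw [div_eq_iff (by positivity : (n:ℝ)+(m:ℝ) ≠ 0)]
    field_simp
    linear_combination hchoose
  rw [hsum, show (a+1)+(J+1)-1 = a+K from by omega,
    show (a+1)+(J+1)-(a+1) = K from by omega]
  have hfx : ((1+x)^n)⁻¹ = f x := rfl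
  rw [hfx]
  have key : (n:ℝ)⁻¹ * taylorWithinEval f J s 0 x - (n:ℝ)⁻¹ * f x
      = -((n:ℝ)⁻¹ * (f x - taylorWithinEval f J s 0 x)) := by ring
  rw [key, abs_neg, abs_mul, abs_of_nonneg (by positivity : (0:ℝ) ≤ (n:ℝ)⁻¹), hrem]
  have hD := hformula K (Ioo_subset_Icc_self hx')
  have h1x' : (0:ℝ) < 1 + x' := by have := hx'.1; linarith
  rw [show (J:ℕ)+1 = K from rfl, hD, sub_zero]
  have habs : |(-1:ℝ)^K * (Nat.ascFactorial n K : ℝ) * ((1+x')^(n+K))⁻¹ * x^K / (K.factorial : ℝ)|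
      = (Nat.ascFactorial n K : ℝ) * ((1+x')^(n+K))⁻¹ * x^K / (K.factorial : ℝ) := by
    rw [show (-1:ℝ)^K * (Nat.ascFactorial n K : ℝ) * ((1+x')^(n+K))⁻¹ * x^K / (K.factorial : ℝ)
        = (-1:ℝ)^K * ((Nat.ascFactorial n K : ℝ) * ((1+x')^(n+K))⁻¹ * x^K / (K.factorial : ℝ))
        from by ring,
      abs_mul, abs_pow, abs_neg, abs_one, one_pow, one_mul,
      abs_of_nonneg (by positivity : (0:ℝ) ≤ (Nat.ascFactorial n K : ℝ) * ((1+x')^(n+K))⁻¹ * x^K / (K.factorial : ℝ))]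
  rw [habs]
  have hasc : (Nat.ascFactorial n K : ℝ) = (K.factorial : ℝ) * ((a+K).choose K : ℝ) := by
    rw [Nat.ascFactorial_eq_factorial_mul_choose']
    push_cast
    congr 3
    omega
  have hB : ((1+x')^(n+K))⁻¹ ≤ 1 := by
    apply inv_le_one_of_one_le₀
    exact one_le_pow₀ (by have := hx'.1; linarith)
  calc (n:ℝ)⁻¹ * ((Nat.ascFactorial n K : ℝ) * ((1+x')^(n+K))⁻¹ * x^K / (K.factorial : ℝ))
      ≤ (n:ℝ)⁻¹ * ((Nat.ascFactorial n K : ℝ) * 1 * x^K / (K.factorial : ℝ)) := by gcongr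
    _ = (n:ℝ)⁻¹ * (((a+K).choose K : ℝ)) * x^K := by
        rw [hasc]
        have : (K.factorial : ℝ) ≠ 0 := by positivity
        field_simp
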